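/- Let T be a finite tree rooted at ρ and S a nonempty set of leaves with ρ ∉ S. Let π be a finite directed path in the graph G(T,S) (where each non-sink edge of T is duplicated in both directions, edges into S are directed toward S, and each sink has a directed edge to ρ) starting and ending at the same vertex. For each v ≠ ρ with parent u, let n_v and m_v be the number of traversals of π from u to v and from v to u respectively, let p_v be the probability random walk from v hits u before S, and set δ_v = p_v n_v - m_v. Then for any internal vertex v with children v^(1),...,v^(b): δ_v = p_v · Σ_{i=1}^b [ δ_{v^(i)} + (1 - p_{v^(i)})(n_{v^(i)} - m_v) ]. -/

import Mathlib

open Finset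

variable {V : Type*} [Fintype V] [DecidableEq V]

/-- `hitIter G S u n w`: probability that simple random walk on `G` from `w` reaches
`u` before the sink set `S` within `n` steps. -/
noncomputable def hitIter (G : SimpleGraph V) [DecidableRel G.Adj]
    (S : Finset V) (u : V) : ℕ → V → ℝ
  | 0 => fun w => if w = u then 1 else 0
  | n + 1 => fun w =>
      if w = u then 1
      else if w ∈ S then 0
      else (∑ x ∈ G.neighborFinset w, hitIter G S u n x) / (G.degree w)

/-- `hitProb G S u w`: probability that simple random walk on `G` from `w` reaches
`u` before the sink set `S`. -/
noncomputable def hitProb (G : SimpleGraph V) [DecidableRel G.Adj]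
    (S : Finset V) (u : V) (w : V) : ℝ :=
  ⨆ n : ℕ, hitIter G S u n w

/-- `trav x L a b`: the number of traversals of the directed edge `(a, b)` by the
path `x 0, x 1, …, x L`. -/
def trav (x : ℕ → V) (L : ℕ) (a b : V) : ℕ :=
  ((Finset.range L).filter (fun i => x i = a ∧ x (i + 1) = b)).card

section Aux

set_option linter.unusedSectionVars false

variable (G : SimpleGraph V) [DecidableRel G.Adj] (S : Finset V) (u : V)

lemma hitIter_nonneg : ∀ n w, 0 ≤ hitIter G S u n w := by
  intro n
  induction n with
  | zero => intro w; simp only [hitIter]; split <;> norm_num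
  | succ n ih =>
    intro w
    simp only [hitIter]
    split
    · norm_num
    split
    · norm_num
    · exact div_nonneg (Finset.sum_nonneg fun x _ => ih x) (by positivity)

lemma hitIter_le_one : ∀ n w, hitIter G S u n w ≤ 1 := by
  intro n
  induction n with
  | zero => intro w; simp only [hitIter]; split <;> norm_num
  | succ n ih =>
    intro w
    simp only [hitIter]
    split
    · norm_num
    split
    · norm_num
    · rcases Nat.eq_zero_or_pos (G.degree w) with h | h
      · rw [h]; norm_num
      · rw [div_le_one (by exact_mod_cast h)]
        calc ∑ x ∈ G.neighborFinset w, hitIter G S u n x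
            ≤ ∑ _x ∈ G.neighborFinset w, 1 := Finset.sum_le_sum fun x _ => ih x
          _ = (G.degree w : ℝ) := by
              rw [Finset.sum_const, SimpleGraph.card_neighborFinset_eq_degree]; simp

lemma hitIter_mono : ∀ n w, hitIter G S u n w ≤ hitIter G S u (n + 1) w := by
  intro n
  induction n with
  | zero =>
    intro w
    simp only [hitIter]
    split
    · norm_num
    split
    · norm_num
    · exact div_nonneg (Finset.sum_nonneg fun x _ => hitIter_nonneg G S u 0 x) (by positivity)
  | succ n ih =>
    intro w
    simp only [hitIter]
    split
    · norm_num
    split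
    · norm_num
    · rcases Nat.eq_zero_or_pos (G.degree w) with h | h
      · rw [h]; norm_num
      · exact div_le_div_of_nonneg_right (Finset.sum_le_sum fun x _ => ih x)
          (by positivity)

lemma hitIter_monotone (w : V) : Monotone fun n => hitIter G S u n w :=
  monotone_nat_of_le_succ fun n => hitIter_mono G S u n w

lemma tendsto_hitIter (w : V) :
    Filter.Tendsto (fun n => hitIter G S u n w) Filter.atTop (nhds (hitProb G S u w)) :=
  tendsto_atTop_ciSup (hitIter_monotone G S u w)
    ⟨1, fun _ ⟨n, hn⟩ => hn ▸ hitIter_le_one G S u n w⟩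

lemma hitProb_self : hitProb G S u u = 1 := by
  have : ∀ n, hitIter G S u n u = 1 := by
    intro n; cases n <;> simp [hitIter]
  simp only [hitProb, this, ciSup_const]

lemma hitProb_sink {s : V} (hs : s ∈ S) (hsu : s ≠ u) : hitProb G S u s = 0 := by
  have : ∀ n, hitIter G S u n s = 0 := by
    intro n; cases n <;> simp [hitIter, hs, hsu]
  simp only [hitProb, this, ciSup_const]

lemma hitProb_harmonic {w : V} (hwu : w ≠ u) (hwS : w ∉ S) (hdeg : 0 < G.degree w) :
    hitProb G S u w * (G.degree w : ℝ) = ∑ y ∈ G.neighborFinset w, hitProb G S u y := by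
  have h1 : Filter.Tendsto (fun n => hitIter G S u (n + 1) w) Filter.atTop
      (nhds (hitProb G S u w)) :=
    (Filter.tendsto_add_atTop_iff_nat 1).mpr (tendsto_hitIter G S u w)
  have h2 : Filter.Tendsto (fun n => (∑ y ∈ G.neighborFinset w, hitIter G S u n y)
      / (G.degree w : ℝ)) Filter.atTop
      (nhds ((∑ y ∈ G.neighborFinset w, hitProb G S u y) / (G.degree w : ℝ))) := by
    apply Filter.Tendsto.div_const
    exact tendsto_finset_sum _ fun y _ => tendsto_hitIter G S u y
  have heq : (fun n => hitIter G S u (n + 1) w)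
      = fun n => (∑ y ∈ G.neighborFinset w, hitIter G S u n y) / (G.degree w : ℝ) := by
    funext n
    simp [hitIter, hwu, hwS]
  rw [heq] at h1
  have := tendsto_nhds_unique h1 h2
  rw [this]
  field_simp

lemma neighborClosed_all (hconn : G.Preconnected) (A : Set V)
    (hA : ∀ w ∈ A, ∀ y, G.Adj w y → y ∈ A) {w₀ : V} (hw₀ : w₀ ∈ A) (z : V) : z ∈ A := by
  have key : ∀ {a b : V} (_ : G.Walk a b), a ∈ A → b ∈ A := by
    intro a b p
    induction p with
    | nil => exact id
    | cons h _ ih => intro ha; exact ih (hA _ ha _ h)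
  obtain ⟨p⟩ := hconn w₀ z
  exact key p hw₀

lemma harmonic_nonpos (hconn : G.Preconnected) (I : Set V) (d : V → ℝ)
    (hz : ∃ z, z ∉ I) (hd0 : ∀ w, w ∉ I → d w = 0)
    (hharm : ∀ w ∈ I, d w * (G.degree w : ℝ) = ∑ y ∈ G.neighborFinset w, d y) :
    ∀ w, d w ≤ 0 := by
  by_contra hc
  push_neg at hc
  obtain ⟨w₁, hw₁⟩ := hc
  obtain ⟨ws, -, hmax⟩ := Finset.exists_max_image univ d ⟨w₁, mem_univ _⟩
  set M := d ws with hM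
  have hMpos : 0 < M := lt_of_lt_of_le hw₁ (hmax w₁ (mem_univ _))
  set A : Set V := {w | d w = M} with hA
  have hclosed : ∀ w ∈ A, ∀ y, G.Adj w y → y ∈ A := by
    intro w hw y hy
    have hwI : w ∈ I := by
      by_contra hwI
      have := hd0 w hwI
      rw [Set.mem_setOf_eq] at hw
      linarith [hw ▸ this]
    have hharm' := hharm w hwI
    rw [Set.mem_setOf_eq] at hw ⊢
    by_contra hne
    have hlt : d y < M := lt_of_le_of_ne (hmax y (mem_univ _)) hne
    have hsum : ∑ z ∈ G.neighborFinset w, d z < ∑ _z ∈ G.neighborFinset w, M :=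
      Finset.sum_lt_sum (fun i _ => hmax i (mem_univ _))
        ⟨y, (SimpleGraph.mem_neighborFinset _ _ _).mpr hy, hlt⟩
    rw [Finset.sum_const, SimpleGraph.card_neighborFinset_eq_degree, nsmul_eq_mul] at hsum
    rw [hw] at hharm'
    linarith [hharm', hsum]
  obtain ⟨z, hzI⟩ := hz
  have hzA : z ∈ A := neighborClosed_all G hconn A hclosed (show ws ∈ A from rfl) z
  have := hd0 z hzI
  rw [Set.mem_setOf_eq] at hzA
  linarith [hzA ▸ this]

lemma harmZero (hconn : G.Preconnected) (I : Set V) (d : V → ℝ)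
    (hz : ∃ z, z ∉ I) (hd0 : ∀ w, w ∉ I → d w = 0)
    (hharm : ∀ w ∈ I, d w * (G.degree w : ℝ) = ∑ y ∈ G.neighborFinset w, d y) :
    ∀ w, d w = 0 := by
  intro w
  have h1 := harmonic_nonpos G hconn I d hz hd0 hharm w
  have h2 := harmonic_nonpos G hconn I (fun w => -d w) hz
    (fun w hw => by simp [hd0 w hw])
    (fun w hw => by simpa [neg_mul, Finset.sum_neg_distrib] using congrArg Neg.neg (hharm w hw)) w
  linarith

variable {ρ : V}

lemma trav_in (x : ℕ → V) (L : ℕ)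
    (hpath : ∀ i < L, (x i ∉ S ∧ G.Adj (x i) (x (i + 1))) ∨ (x i ∈ S ∧ x (i + 1) = ρ))
    (v : V) (hv : v ≠ ρ) :
    ∑ w ∈ G.neighborFinset v, trav x L w v
      = ∑ i ∈ range L, if x (i + 1) = v then 1 else 0 := by
  simp only [trav, Finset.card_filter]
  rw [Finset.sum_comm]
  refine Finset.sum_congr rfl fun i hi => ?_
  by_cases hq : x (i + 1) = v
  · have hmem : x i ∈ G.neighborFinset v := by
      rcases hpath i (Finset.mem_range.mp hi) with ⟨-, hadj⟩ | ⟨-, hr⟩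
      · rw [SimpleGraph.mem_neighborFinset]
        exact (hq ▸ hadj).symm
      · exact absurd (hr.symm.trans hq) (Ne.symm hv)
    simp only [hq, and_true]
    rw [Finset.sum_ite_eq (G.neighborFinset v) (x i) (fun _ => 1)]
    simp [hmem]
  · simp [hq]

lemma trav_out (x : ℕ → V) (L : ℕ)
    (hpath : ∀ i < L, (x i ∉ S ∧ G.Adj (x i) (x (i + 1))) ∨ (x i ∈ S ∧ x (i + 1) = ρ))
    (v : V) (hvS : v ∉ S) :
    ∑ w ∈ G.neighborFinset v, trav x L v w
      = ∑ i ∈ range L, if x i = v then 1 else 0 := by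
  simp only [trav, Finset.card_filter]
  rw [Finset.sum_comm]
  refine Finset.sum_congr rfl fun i hi => ?_
  by_cases hq : x i = v
  · have hmem : x (i + 1) ∈ G.neighborFinset v := by
      rcases hpath i (Finset.mem_range.mp hi) with ⟨-, hadj⟩ | ⟨hs, -⟩
      · rw [SimpleGraph.mem_neighborFinset]
        exact hq ▸ hadj
      · exact absurd (hq ▸ hs) hvS
    simp only [hq, true_and]
    rw [Finset.sum_ite_eq (G.neighborFinset v) (x (i + 1)) (fun _ => 1)]
    simp [hmem]
  · simp [hq]

lemma shift_count (x : ℕ → V) (L : ℕ) (hclosed : x 0 = x L) (v : V) :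
    (∑ i ∈ range L, if x (i + 1) = v then (1 : ℕ) else 0)
      = ∑ i ∈ range L, if x i = v then 1 else 0 := by
  set f : ℕ → ℕ := fun i => if x i = v then 1 else 0 with hf
  show (∑ i ∈ range L, f (i + 1)) = ∑ i ∈ range L, f i
  have h1 : ∑ i ∈ range (L + 1), f i = (∑ i ∈ range L, f (i + 1)) + f 0 :=
    Finset.sum_range_succ' f L
  have h2 : ∑ i ∈ range (L + 1), f i = (∑ i ∈ range L, f i) + f L :=
    Finset.sum_range_succ f L
  have h3 : f 0 = f L := by simp only [hf, hclosed]
  omega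

lemma exists_adj_dist (hconn : G.Connected) {a : V} (ha : a ≠ ρ) :
    ∃ y, G.Adj a y ∧ G.dist ρ y + 1 = G.dist ρ a := by
  obtain ⟨p, hp⟩ := (hconn ρ a).exists_walk_length_eq_dist
  obtain ⟨y, hadj, q, hq⟩ := SimpleGraph.Walk.exists_eq_cons_of_ne ha p.reverse
  refine ⟨y, hadj, ?_⟩
  have h1 : G.dist ρ y ≤ q.reverse.length := SimpleGraph.dist_le q.reverse
  have h2 : q.reverse.length = q.length := SimpleGraph.Walk.length_reverse q
  have h3 : q.length + 1 = G.dist ρ a := by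
    have := congrArg SimpleGraph.Walk.length hq
    rw [SimpleGraph.Walk.length_reverse, SimpleGraph.Walk.length_cons] at this
    omega
  have h4 : G.dist ρ a ≤ G.dist ρ y + 1 := by
    calc G.dist ρ a ≤ G.dist ρ y + G.dist y a := hconn.dist_triangle
      _ ≤ G.dist ρ y + 1 := by
          have := SimpleGraph.dist_le (SimpleGraph.Walk.cons hadj.symm SimpleGraph.Walk.nil)
          simp at this
          omega
  omega

lemma subtree_key (hacyc : G.IsAcyclic) {u v w : V} (hadj : G.Adj u v)
    (p : G.Walk v w) (hup : u ∉ p.support) (hwu : G.Adj w u) : w = v := by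
  by_contra hwv
  set q : G.Path v w := p.toPath with hqdef
  have huq : u ∉ (q : G.Walk v w).support := fun h => hup (p.support_toPath_subset h)
  have hpath : (q.val.concat hwu).IsPath := by
    rw [← SimpleGraph.Walk.isPath_reverse_iff, SimpleGraph.Walk.reverse_concat]
    apply SimpleGraph.Walk.IsPath.cons
    · exact q.2.reverse
    · rw [SimpleGraph.Walk.support_reverse]
      simpa using huq
  have hedge : s(u, v) ∉ (q.val.concat hwu).edges := by
    rw [SimpleGraph.Walk.edges_concat]
    intro h
    simp only [List.concat_eq_append, List.mem_append, List.mem_singleton] at h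
    rcases h with h | h
    · exact huq (SimpleGraph.Walk.fst_mem_support_of_mem_edges _ h)
    · rw [Sym2.eq_iff] at h
      rcases h with ⟨h1, h2⟩ | ⟨h1, h2⟩
      · exact hwu.ne h1.symm
      · exact hwv h2.symm
  exact hacyc _ (SimpleGraph.Path.cons_isCycle ⟨q.val.concat hwu, hpath⟩ hadj hedge)

end Aux

theorem discrepancy_recursion (G : SimpleGraph V) [DecidableRel G.Adj]
    (hT : G.IsTree) (ρ : V) (hρdeg : G.degree ρ = 1)
    (S : Finset V) (hS : S.Nonempty) (hSleaf : ∀ s ∈ S, G.degree s = 1)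
    (hρS : ρ ∉ S)
    (x : ℕ → V) (L : ℕ) (hclosed : x 0 = x L)
    (hpath : ∀ i < L, (x i ∉ S ∧ G.Adj (x i) (x (i + 1))) ∨ (x i ∈ S ∧ x (i + 1) = ρ))
    (v : V) (hv : v ≠ ρ) (hvS : v ∉ S)
    (u : V) (hadj : G.Adj u v) (hparent : G.dist ρ u + 1 = G.dist ρ v) :
    hitProb G S u v * (trav x L u v : ℝ) - (trav x L v u : ℝ)
      = hitProb G S u v *
          ∑ c ∈ G.neighborFinset v \ {u},
            ((hitProb G S v c * (trav x L v c : ℝ) - (trav x L c v : ℝ))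
              + (1 - hitProb G S v c) * ((trav x L v c : ℝ) - (trav x L v u : ℝ))) := by
  classical
  obtain ⟨hconn, hacyc⟩ := hT
  have huv : u ≠ v := hadj.ne
  have hdegpos : ∀ w : V, 0 < G.degree w := by
    intro w
    obtain ⟨z, hz⟩ : ∃ z, w ≠ z := by
      rcases eq_or_ne w u with rfl | h
      · exact ⟨v, huv⟩
      · exact ⟨u, h⟩
    obtain ⟨p⟩ := hconn w z
    obtain ⟨y, hy, -, -⟩ := SimpleGraph.Walk.exists_eq_cons_of_ne hz p
    rw [← SimpleGraph.card_neighborFinset_eq_degree]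
    exact Finset.card_pos.mpr ⟨y, (SimpleGraph.mem_neighborFinset _ _ _).mpr hy⟩
  have huS : u ∉ S := by
    intro hu
    have hdeg1 := hSleaf u hu
    by_cases hur : u = ρ
    · exact hρS (hur ▸ hu)
    · obtain ⟨y, hy, hyd⟩ := exists_adj_dist G hconn hur
      have hvy : v ≠ y := by
        intro h
        rw [← h] at hyd
        omega
      have hsub : ({v, y} : Finset V) ⊆ G.neighborFinset u := by
        intro z hz
        rcases Finset.mem_insert.mp hz with rfl | hz
        · exact (SimpleGraph.mem_neighborFinset _ _ _).mpr hadj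
        · exact (SimpleGraph.mem_neighborFinset _ _ _).mpr (Finset.mem_singleton.mp hz ▸ hy)
      have h2 : 2 ≤ G.degree u := by
        rw [← SimpleGraph.card_neighborFinset_eq_degree]
        calc 2 = ({v, y} : Finset V).card := (Finset.card_pair hvy).symm
          _ ≤ _ := Finset.card_le_card hsub
      omega
  -- the subtree below v (component of v when u is removed)
  set R : Set V := {w | ∃ p : G.Walk v w, u ∉ p.support} with hRdef
  have hvR : v ∈ R := ⟨SimpleGraph.Walk.nil, by simp [huv]⟩
  have huR : u ∉ R := by
    rintro ⟨p, hp⟩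
    exact hp p.end_mem_support
  have hclosure : ∀ w ∈ R, ∀ y, G.Adj w y → y ≠ u → y ∈ R := by
    rintro w ⟨p, hp⟩ y hady hyu
    refine ⟨p.concat hady, ?_⟩
    rw [SimpleGraph.Walk.support_concat]
    simp only [List.concat_eq_append, List.mem_append, List.mem_singleton]
    rintro (h | h)
    · exact hp h
    · exact hyu h.symm
  have hkey : ∀ w ∈ R, G.Adj w u → w = v := by
    rintro w ⟨p, hp⟩ hwu
    exact subtree_key G hacyc hadj p hp hwu
  -- multiplicativity of hitting probabilities on the subtree, by uniqueness of
  -- harmonic extensions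
  have hdzero := harmZero G hconn.preconnected (R \ ({v} ∪ ↑S))
    (fun w => if w ∈ R then hitProb G S u w - hitProb G S u v * hitProb G S v w else 0)
    ⟨u, fun hI => huR hI.1⟩
    (by
      intro w hw
      by_cases hwR : w ∈ R
      · simp only [if_pos hwR]
        have hmem : w = v ∨ w ∈ S := by
          by_contra hcon
          push_neg at hcon
          exact hw ⟨hwR, by simp [hcon.1, hcon.2]⟩
        rcases hmem with rfl | hwS'
        · rw [hitProb_self]; ring
        · rw [hitProb_sink G S u hwS' (fun h => huS (h ▸ hwS')),
            hitProb_sink G S v hwS' (fun h => hvS (h ▸ hwS'))]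
          ring
      · simp [hwR])
    (by
      intro w hw
      obtain ⟨hwR, hwvS⟩ := hw
      have hwv : w ≠ v := fun h => hwvS (Or.inl h)
      have hwS' : w ∉ S := fun h => hwvS (Or.inr h)
      have hwu : w ≠ u := fun h => huR (h ▸ hwR)
      have hh := hitProb_harmonic G S u hwu hwS' (hdegpos w)
      have hg := hitProb_harmonic G S v hwv hwS' (hdegpos w)
      have hy : ∀ y ∈ G.neighborFinset w,
          (if y ∈ R then hitProb G S u y - hitProb G S u v * hitProb G S v y else 0)
            = hitProb G S u y - hitProb G S u v * hitProb G S v y := by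
        intro y hy
        have hady : G.Adj w y := (SimpleGraph.mem_neighborFinset _ _ _).mp hy
        have hyu : y ≠ u := by
          rintro rfl
          exact hwv (hkey w hwR hady)
        rw [if_pos (hclosure w hwR y hady hyu)]
      rw [if_pos hwR, Finset.sum_congr rfl hy, Finset.sum_sub_distrib, ← Finset.mul_sum,
        ← hh, ← hg]
      ring)
  have hchild : ∀ c ∈ G.neighborFinset v \ {u},
      hitProb G S u c = hitProb G S u v * hitProb G S v c := by
    intro c hc
    obtain ⟨hc1, hc2⟩ := Finset.mem_sdiff.mp hc
    have hadc : G.Adj v c := (SimpleGraph.mem_neighborFinset _ _ _).mp hc1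
    have hcu : c ≠ u := by simpa using hc2
    have hcR : c ∈ R := hclosure v hvR c hadc hcu
    have := hdzero c
    rw [if_pos hcR] at this
    linarith
  -- harmonicity at v (for target u)
  have humem : u ∈ G.neighborFinset v := (SimpleGraph.mem_neighborFinset _ _ _).mpr hadj.symm
  have hharmv := hitProb_harmonic G S u (Ne.symm huv) hvS (hdegpos v)
  rw [Finset.sum_eq_add_sum_sdiff_singleton_of_mem humem] at hharmv
  rw [hitProb_self] at hharmv
  rw [Finset.sum_congr rfl hchild, ← Finset.mul_sum] at hharmv
  -- degree of v in terms of the number of children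
  have hcard : (G.degree v : ℝ) = 1 + ((G.neighborFinset v \ {u}).card : ℝ) := by
    have h1 : (G.neighborFinset v \ {u}).card = G.degree v - 1 := by
      rw [← SimpleGraph.card_neighborFinset_eq_degree,
        Finset.card_sdiff_of_subset (by simpa using humem)]
      simp
    have h2 : 1 ≤ G.degree v := hdegpos v
    rw [h1]
    push_cast [Nat.cast_sub h2]
    ring
  -- flow conservation at v
  have hflow : ∑ w ∈ G.neighborFinset v, trav x L w v
      = ∑ w ∈ G.neighborFinset v, trav x L v w :=
    (trav_in G S x L hpath v hv).trans
      ((shift_count x L hclosed v).trans (trav_out G S x L hpath v hvS).symm)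
  rw [Finset.sum_eq_add_sum_sdiff_singleton_of_mem humem (fun w => trav x L w v),
    Finset.sum_eq_add_sum_sdiff_singleton_of_mem humem (fun w => trav x L v w)] at hflow
  have e1 : (trav x L u v : ℝ) + ∑ c ∈ G.neighborFinset v \ {u}, (trav x L c v : ℝ)
      = (trav x L v u : ℝ) + ∑ c ∈ G.neighborFinset v \ {u}, (trav x L v c : ℝ) := by
    exact_mod_cast congrArg (Nat.cast : ℕ → ℝ) hflow
  -- final algebra
  have hsum : ∑ c ∈ G.neighborFinset v \ {u},
      ((hitProb G S v c * (trav x L v c : ℝ) - (trav x L c v : ℝ))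
        + (1 - hitProb G S v c) * ((trav x L v c : ℝ) - (trav x L v u : ℝ)))
      = (∑ c ∈ G.neighborFinset v \ {u}, (trav x L v c : ℝ))
        - (∑ c ∈ G.neighborFinset v \ {u}, (trav x L c v : ℝ))
        - (trav x L v u : ℝ) * ((G.neighborFinset v \ {u}).card : ℝ)
        + (trav x L v u : ℝ) * ∑ c ∈ G.neighborFinset v \ {u}, hitProb G S v c := by
    rw [Finset.sum_congr rfl (fun c _ => show _ = ((trav x L v c : ℝ) - (trav x L c v : ℝ)
      - (trav x L v u : ℝ) + (trav x L v u : ℝ) * hitProb G S v c) by ring)]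
    rw [Finset.sum_add_distrib, Finset.sum_sub_distrib, Finset.sum_sub_distrib,
      Finset.sum_const, ← Finset.mul_sum]
    push_cast
    ring
  rw [hsum]
  set P := hitProb G S u v
  set SP := ∑ c ∈ G.neighborFinset v \ {u}, hitProb G S v c
  set B := ((G.neighborFinset v \ {u}).card : ℝ)
  rw [hcard] at hharmv
  linear_combination P * e1 + (trav x L v u : ℝ) * hharmv
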